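/- Let Q ⊂ ℝ^N be a cube and f ∈ L¹(Q; ℝ^d). Then there exist real measurable functions φ₁, …, φ_d supported on Q with ‖φ_i‖_∞ ≤ 1 such that for every measurable g : Q → ℝ^d with g(x) ∈ ⟨⟨f⟩⟩_Q a.e. on Q there exist real measurable functions ψ₁, …, ψ_d with ‖ψ_i‖_∞ ≤ C(d) (a constant depending only on d) such that g(x) = Σ_{i=1}^d ψ_i(x)·⟨φ_i f⟩_Q for a.e. x ∈ Q. -/

import Mathlib

open MeasureTheory Set Matrix
open scoped ENNReal BigOperators NNReal

noncomputable section

namespace CBD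

/-- The Euclidean norm of a vector in `ℝ^n` given as a plain function. -/
def vnorm {n : ℕ} (v : Fin n → ℝ) : ℝ := Real.sqrt (∑ i, v i ^ 2)

/-- An axis-parallel half-open cube in `ℝ^N`. -/
structure Cube (N : ℕ) where
  corner : Fin N → ℝ
  side : ℝ
  side_pos : 0 < side

namespace Cube

variable {N : ℕ}

/-- The subset of `ℝ^N` determined by the cube. -/
def set (Q : Cube N) : Set (Fin N → ℝ) :=
  {x | ∀ i, Q.corner i ≤ x i ∧ x i < Q.corner i + Q.side}

/-- The volume `|Q|` of the cube. -/
def vol (Q : Cube N) : ℝ := Q.side ^ N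

/-- The concentric dilation `rQ` (intended for `r ≥ 1`; implemented with `max r 1`). -/
def dilate (Q : Cube N) (r : ℝ) : Cube N where
  corner := fun i => Q.corner i + Q.side / 2 - max r 1 * Q.side / 2
  side := max r 1 * Q.side
  side_pos := mul_pos (lt_of_lt_of_le one_pos (le_max_right r 1)) Q.side_pos

/-- `Q` belongs to the standard dyadic lattice `D`:
`Q = 2^{-k}([0,1)^N + m)` for some `k ∈ ℤ`, `m ∈ ℤ^N`. -/
def IsDyadic (Q : Cube N) : Prop :=
  ∃ (k : ℤ) (m : Fin N → ℤ), Q.side = (2:ℝ) ^ (-k) ∧ ∀ i, Q.corner i = (2:ℝ) ^ (-k) * (m i : ℝ)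

/-- The subcube of `Q` of dyadic generation `k` in position `m`. -/
def subCube (Q : Cube N) (k : ℕ) (m : Fin N → ℕ) : Cube N where
  corner := fun i => Q.corner i + Q.side * (m i : ℝ) / 2 ^ k
  side := Q.side / 2 ^ k
  side_pos := div_pos Q.side_pos (by positivity)

/-- `R` is a dyadic subcube of `Q` (relative dyadic lattice `D(Q)`, including `Q` itself). -/
def IsDyadicSub (Q R : Cube N) : Prop :=
  ∃ (k : ℕ) (m : Fin N → ℕ), (∀ i, m i < 2 ^ k) ∧ R = Q.subCube k m

end Cube

variable {N d : ℕ}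

/-- The dyadic lattice, as a set of cubes. -/
def dyadicCubes (N : ℕ) : Set (Cube N) := {Q | Q.IsDyadic}

/-- All cubes in `ℝ^N`. -/
def allCubes (N : ℕ) : Set (Cube N) := Set.univ

/-- The average `⟨g⟩_Q = |Q|⁻¹ ∫_Q g`. -/
def avg (Q : Cube N) (g : (Fin N → ℝ) → ℝ) : ℝ :=
  (Q.vol)⁻¹ * ∫ y in Q.set, g y

/-- The entrywise average `⟨W⟩_Q` of a matrix-valued function. -/
def matAvg (Q : Cube N) (W : (Fin N → ℝ) → Matrix (Fin d) (Fin d) ℝ) :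
    Matrix (Fin d) (Fin d) ℝ :=
  Matrix.of fun i j => avg Q fun x => W x i j

/-- The positive semidefinite square root of a matrix (junk value `0` off psd matrices). -/
def msqrt (A : Matrix (Fin d) (Fin d) ℝ) : Matrix (Fin d) (Fin d) ℝ :=
  letI := Classical.dec A.PosSemidef
  if h : A.PosSemidef then
    (h.1.eigenvectorUnitary : Matrix (Fin d) (Fin d) ℝ) * diagonal (Real.sqrt ∘ h.1.eigenvalues) *
      star (h.1.eigenvectorUnitary : Matrix (Fin d) (Fin d) ℝ)
  else 0

/-- The `ℓ² → ℓ²` operator norm of a `d × d` matrix. -/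
def matOpNorm (A : Matrix (Fin d) (Fin d) ℝ) : ℝ :=
  sSup {t | ∃ v : Fin d → ℝ, vnorm v ≤ 1 ∧ t = vnorm (A.mulVec v)}

/-- A `d`-dimensional matrix weight: locally integrable, positive semidefinite values. -/
def IsMatrixWeight (W : (Fin N → ℝ) → Matrix (Fin d) (Fin d) ℝ) : Prop :=
  (∀ x, (W x).PosSemidef) ∧ ∀ i j, LocallyIntegrable (fun x => W x i j) volume

/-- A scalar weight: nonnegative and locally integrable. -/
def IsScalarWeight (w : (Fin N → ℝ) → ℝ) : Prop :=
  (∀ x, 0 ≤ w x) ∧ LocallyIntegrable w volume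

/-- The maximal function adapted to the cube `Q`:
`M_Q w(x) = sup {⟨w⟩_R : R ∈ D(Q), x ∈ R}` (and `0` off `Q`). -/
def MQ (Q : Cube N) (w : (Fin N → ℝ) → ℝ) (x : Fin N → ℝ) : ℝ :=
  sSup ({0} ∪ {t | ∃ R : Cube N, Q.IsDyadicSub R ∧ x ∈ R.set ∧ t = avg R w})

/-- Admissible `A∞` constants of a scalar weight, over a collection `𝒬` of cubes. -/
def AinftyOn (𝒬 : Set (Cube N)) (w : (Fin N → ℝ) → ℝ) : Set ℝ :=
  {C | 0 ≤ C ∧ ∀ Q ∈ 𝒬, avg Q (MQ Q w) ≤ C * avg Q w}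

/-- The `A∞` characteristic (best admissible constant) of a scalar weight. -/
def AinftyChar (𝒬 : Set (Cube N)) (w : (Fin N → ℝ) → ℝ) : ℝ := sInf (AinftyOn 𝒬 w)

/-- The scalar weight `w_e(x) = (W(x)e, e)` associated to a matrix weight and `e ∈ ℝ^d`. -/
def we (W : (Fin N → ℝ) → Matrix (Fin d) (Fin d) ℝ) (e : Fin d → ℝ) :
    (Fin N → ℝ) → ℝ := fun x => e ⬝ᵥ (W x).mulVec e

/-- Admissible constants for the scalar `A∞` characteristic of a matrix weight. -/
def matAinftyScOn (𝒬 : Set (Cube N)) (W : (Fin N → ℝ) → Matrix (Fin d) (Fin d) ℝ) : Set ℝ :=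
  {C | 0 ≤ C ∧ ∀ e : Fin d → ℝ, ∀ Q ∈ 𝒬, avg Q (MQ Q (we W e)) ≤ C * avg Q (we W e)}

/-- The scalar `A∞` characteristic `[W]^{sc}_{A∞} = sup_e [w_e]_{A∞}` of a matrix weight. -/
def matAinftyScChar (𝒬 : Set (Cube N)) (W : (Fin N → ℝ) → Matrix (Fin d) (Fin d) ℝ) : ℝ :=
  sInf (matAinftyScOn 𝒬 W)

/-- Admissible constants for the two-weight matrix `A₂` characteristic
`[W,V]_{A₂} = sup_Q ‖⟨W⟩_Q^{1/2} ⟨V⟩_Q^{1/2}‖²`. -/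
def A2pairOn (𝒬 : Set (Cube N)) (W V : (Fin N → ℝ) → Matrix (Fin d) (Fin d) ℝ) : Set ℝ :=
  {C | ∀ Q ∈ 𝒬, matOpNorm (msqrt (matAvg Q W) * msqrt (matAvg Q V)) ^ 2 ≤ C}

/-- The two-weight matrix `A₂` characteristic. -/
def A2pairChar (𝒬 : Set (Cube N)) (W V : (Fin N → ℝ) → Matrix (Fin d) (Fin d) ℝ) : ℝ :=
  sInf (A2pairOn 𝒬 W V)

/-- Admissible constants for the scalar `A₂` characteristic `sup_Q ⟨w⟩_Q ⟨w⁻¹⟩_Q`. -/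
def scalarA2On (𝒬 : Set (Cube N)) (w : (Fin N → ℝ) → ℝ) : Set ℝ :=
  {C | ∀ Q ∈ 𝒬, avg Q w * avg Q (fun x => (w x)⁻¹) ≤ C}

/-- The scalar `A₂` characteristic. -/
def scalarA2Char (𝒬 : Set (Cube N)) (w : (Fin N → ℝ) → ℝ) : ℝ := sInf (scalarA2On 𝒬 w)

/-- An `ω`-Calderón–Zygmund operator on `ℝ^N`: a linear operator, bounded on `L²`,
with a kernel representation off the support, whose kernel satisfies the standard size
condition and the `ω`-smoothness condition, `ω` being a modulus of continuity. -/
structure CZO (N : ℕ) where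
  op : ((Fin N → ℝ) → ℝ) →ₗ[ℝ] ((Fin N → ℝ) → ℝ)
  K : (Fin N → ℝ) → (Fin N → ℝ) → ℝ
  ω : ℝ → ℝ
  CK : ℝ
  normBound : ℝ
  bounded : ∀ f : (Fin N → ℝ) → ℝ, MemLp f 2 volume →
    MemLp (op f) 2 volume ∧
      eLpNorm (op f) 2 volume ≤ ENNReal.ofReal normBound * eLpNorm f 2 volume
  repr : ∀ f : (Fin N → ℝ) → ℝ, MemLp f 2 volume → ∀ x ∉ tsupport f,
    op f x = ∫ y, K x y * f y
  size : ∀ x y : Fin N → ℝ, x ≠ y → |K x y| ≤ CK / vnorm (x - y) ^ N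
  smooth : ∀ x x' y : Fin N → ℝ, x ≠ y → vnorm (x - x') ≤ vnorm (x - y) / 2 →
    |K x y - K x' y| + |K y x - K y x'| ≤
      ω (vnorm (x - x') / vnorm (x - y)) / vnorm (x - y) ^ N
  omega_zero : ω 0 = 0
  omega_mono : MonotoneOn ω (Set.Ici 0)
  omega_subadd : ∀ s t : ℝ, 0 ≤ s → 0 ≤ t → ω (s + t) ≤ ω s + ω t

/-- The Dini condition `∫₀¹ ω(t) dt/t < ∞` for a modulus of continuity. -/
def Dini (ω : ℝ → ℝ) : Prop :=
  IntegrableOn (fun t => ω t / t) (Set.Ioc (0:ℝ) 1) volume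

/-- Componentwise (i.e. `T ⊗ I_d`) action of a scalar operator on vector-valued functions. -/
def vecApply (T : ((Fin N → ℝ) → ℝ) → ((Fin N → ℝ) → ℝ))
    (f : (Fin N → ℝ) → Fin d → ℝ) : (Fin N → ℝ) → Fin d → ℝ :=
  fun x i => T (fun y => f y i) x

/-- `T` maps `L²` to `L²` with operator norm at most `M`. -/
def L2OpNormLe (T : ((Fin N → ℝ) → ℝ) → ((Fin N → ℝ) → ℝ)) (M : ℝ) : Prop :=
  ∀ f : (Fin N → ℝ) → ℝ, MemLp f 2 volume →
    MemLp (T f) 2 volume ∧ eLpNorm (T f) 2 volume ≤ ENNReal.ofReal M * eLpNorm f 2 volume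

/-- `T` is bounded on `L²`. -/
def L2Bounded (T : ((Fin N → ℝ) → ℝ) → ((Fin N → ℝ) → ℝ)) : Prop :=
  ∃ M : ℝ, L2OpNormLe T M

/-- The family of kernels of a (generalized big) Haar shift of complexity `r`:
`K_Q` is supported on `Q × Q`, bounded by `|Q|⁻¹`, constant on products of
`(r+1)`-st generation dyadic subcubes of `Q`, and vanishes for non-dyadic `Q`. -/
structure HaarShiftKernel (N : ℕ) (r : ℕ) where
  K : Cube N → (Fin N → ℝ) → (Fin N → ℝ) → ℝ
  measK : ∀ Q : Cube N, Measurable (Function.uncurry (K Q))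
  suppK : ∀ Q : Cube N, ∀ x y, K Q x y ≠ 0 → x ∈ Q.set ∧ y ∈ Q.set
  bddK : ∀ Q : Cube N, ∀ x y, |K Q x y| ≤ (Cube.vol Q)⁻¹
  constK : ∀ Q : Cube N, ∀ m m' : Fin N → ℕ,
    (∀ i, m i < 2 ^ (r + 1)) → (∀ i, m' i < 2 ^ (r + 1)) →
    ∀ x x' y y', x ∈ (Q.subCube (r + 1) m).set → x' ∈ (Q.subCube (r + 1) m).set →
      y ∈ (Q.subCube (r + 1) m').set → y' ∈ (Q.subCube (r + 1) m').set →
      K Q x y = K Q x' y'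
  dyadicK : ∀ Q : Cube N, ¬Q.IsDyadic → K Q = 0

/-- The operator `𝕊 = Σ_{Q ∈ D} T_Q` associated to a family of Haar shift kernels. -/
def hsApply {r : ℕ} (S : HaarShiftKernel N r) (f : (Fin N → ℝ) → ℝ) : (Fin N → ℝ) → ℝ :=
  fun x => ∑' Q : Cube N, ∫ y, S.K Q x y * f y

/-- The cancellation conditions `T_Q 1_Q = 0`, `T_Q^* 1_Q = 0` making a generalized
big Haar shift a big Haar shift. -/
def IsBigShift {r : ℕ} (S : HaarShiftKernel N r) : Prop :=
  (∀ Q : Cube N, ∀ x, (∫ y, S.K Q x y) = 0) ∧ (∀ Q : Cube N, ∀ y, (∫ x, S.K Q x y) = 0)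

/-- The sublattice `D̃ = ∪_j D_{k+(r+1)j}` of the dyadic lattice. -/
def Dtilde (N r k : ℕ) : Set (Cube N) :=
  {Q | Q.IsDyadic ∧ ∃ j : ℤ, Q.side = (2:ℝ) ^ (-((k : ℤ) + (r + 1) * j))}

/-- The Haar shift is `r`-separated with lattice parameter `k`:
`T_Q ≠ 0` only for `Q ∈ D̃`. -/
def SeparatedKernel {r : ℕ} (S : HaarShiftKernel N r) (k : ℕ) : Prop :=
  ∀ Q : Cube N, S.K Q ≠ 0 → Q ∈ Dtilde N r k

/-- The martingale difference `Δ_R b = Σ_{R' child of R} ⟨b⟩_{R'} 1_{R'} - ⟨b⟩_R 1_R`. -/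
def haarDelta (R : Cube N) (b : (Fin N → ℝ) → ℝ) (x : Fin N → ℝ) : ℝ :=
  (∑ m : Fin N → Fin 2, Set.indicator (R.subCube 1 fun i => (m i : ℕ)).set
      (fun _ => avg (R.subCube 1 fun i => (m i : ℕ)) b) x)
    - Set.indicator R.set (fun _ => avg R b) x

/-- The paraproduct of order `r` with symbol `b`:
`Π_b^r f = Σ_{Q ∈ D} ⟨f⟩_Q Σ_{R ∈ ch^r Q} Δ_R b`. -/
def paraApply (r : ℕ) (b f : (Fin N → ℝ) → ℝ) : (Fin N → ℝ) → ℝ :=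
  fun x => ∑' Q : dyadicCubes N,
    avg Q.val f * ∑ m : Fin N → Fin (2 ^ r), haarDelta (Q.val.subCube r fun i => (m i : ℕ)) b x

/-- The paraproduct `Π_b^r` is `r`-separated with lattice parameter `k`. -/
def SeparatedPara (r : ℕ) (b : (Fin N → ℝ) → ℝ) (k : ℕ) : Prop :=
  ∀ Q : Cube N, Q.IsDyadic →
    (∃ x, (∑ m : Fin N → Fin (2 ^ r), haarDelta (Q.subCube r fun i => (m i : ℕ)) b x) ≠ 0) →
    Q ∈ Dtilde N r k

/-- `T` is a big Haar shift of complexity `r`, or a paraproduct of order `r`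
with `L²` norm at most `2^{-Nr/2}`. -/
def IsShiftOrParaproduct (N r : ℕ) (T : ((Fin N → ℝ) → ℝ) → ((Fin N → ℝ) → ℝ)) : Prop :=
  (∃ S : HaarShiftKernel N r, IsBigShift S ∧ L2Bounded (hsApply S) ∧ T = hsApply S) ∨
  (∃ b : (Fin N → ℝ) → ℝ, LocallyIntegrable b volume ∧
      L2OpNormLe (paraApply r b) (Real.sqrt ((2:ℝ) ^ (N * r)))⁻¹ ∧ T = paraApply r b)

/-- `T` is an `r`-separated big Haar shift of complexity `r`, or an `r`-separated
paraproduct of order `r` with `L²` norm at most `2^{-Nr/2}`; `k ≤ r` is the lattice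
parameter of the separation sublattice `D̃`. -/
def IsSeparatedShiftOrParaproduct (N r k : ℕ)
    (T : ((Fin N → ℝ) → ℝ) → ((Fin N → ℝ) → ℝ)) : Prop :=
  k ≤ r ∧
  ((∃ S : HaarShiftKernel N r, IsBigShift S ∧ L2Bounded (hsApply S) ∧
      SeparatedKernel S k ∧ T = hsApply S) ∨
   (∃ b : (Fin N → ℝ) → ℝ, LocallyIntegrable b volume ∧
      L2OpNormLe (paraApply r b) (Real.sqrt ((2:ℝ) ^ (N * r)))⁻¹ ∧
      SeparatedPara r b k ∧ T = paraApply r b))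

/-- The convex-body average `⟨⟨f⟩⟩_Q = {⟨φ f⟩_Q : ‖φ‖_∞ ≤ 1}`. -/
def cbAvg (Q : Cube N) (f : (Fin N → ℝ) → Fin d → ℝ) : Set (Fin d → ℝ) :=
  {v | ∃ φ : (Fin N → ℝ) → ℝ, Measurable φ ∧ (∀ x, |φ x| ≤ 1) ∧
        v = fun i => avg Q fun x => φ x * f x i}

/-- A weakly `η`-sparse family of cubes: there are pairwise disjoint measurable
subsets `E_Q ⊆ Q` with `|E_Q| ≥ η |Q|`. -/
def WeaklySparse (S : Set (Cube N)) (η : ℝ) : Prop :=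
  ∃ E : Cube N → Set (Fin N → ℝ),
    (∀ Q ∈ S, E Q ⊆ Q.set ∧ MeasurableSet (E Q) ∧ ENNReal.ofReal (η * Q.vol) ≤ volume (E Q)) ∧
    S.PairwiseDisjoint E

/-- The value at `x` of the convex-body sparse operator
`𝐋_S f = Σ_{Q ∈ S} ⟨⟨f⟩⟩_Q 1_Q` (an infinite Minkowski sum): all convergent sums
`Σ_Q g(Q)` with `g(Q) ∈ ⟨⟨f⟩⟩_Q` whenever `Q ∈ S` contains `x`, and `g(Q) = 0` otherwise. -/
def sparseBody (S : Set (Cube N)) (f : (Fin N → ℝ) → Fin d → ℝ) (x : Fin N → ℝ) :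
    Set (Fin d → ℝ) :=
  {v | ∃ g : Cube N → Fin d → ℝ,
        (∀ Q : Cube N, Q ∈ S ∧ x ∈ Q.set → g Q ∈ cbAvg Q f) ∧
        (∀ Q : Cube N, ¬(Q ∈ S ∧ x ∈ Q.set) → g Q = 0) ∧ HasSum g v}

/-- The `S`-children of `Q`: maximal cubes of `S` strictly contained in `Q`. -/
def sChildren (S : Set (Cube N)) (Q : Cube N) : Set (Cube N) :=
  {R | R ∈ S ∧ R.set ⊂ Q.set ∧ ¬∃ R' ∈ S, R.set ⊂ R'.set ∧ R'.set ⊂ Q.set}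

/-- A classical `ε`-sparse family of dyadic cubes: `Σ_{R ∈ ch_S(Q)} |R| ≤ ε |Q|`. -/
def EpsSparse (S : Set (Cube N)) (ε : ℝ) : Prop :=
  (∀ Q ∈ S, Q.IsDyadic) ∧
  ∀ Q ∈ S, ∀ F : Finset (Cube N), ↑F ⊆ sChildren S Q → ∑ R ∈ F, R.vol ≤ ε * Q.vol

/-- A dyadic `λ`-Carleson family: `Σ_{R ∈ S, R ⊆ Q} |R| ≤ λ |Q|` for all `Q ∈ S`. -/
def DyadicCarleson (S : Set (Cube N)) (lam : ℝ) : Prop :=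
  (∀ Q ∈ S, Q.IsDyadic) ∧
  ∀ Q ∈ S, ∀ F : Finset (Cube N), (↑F ⊆ {R | R ∈ S ∧ R.set ⊆ Q.set}) →
    ∑ R ∈ F, R.vol ≤ lam * Q.vol

/-- A simple sparse family: every cube of `S` has at most one `S`-child. -/
def SimpleSparse (S : Set (Cube N)) : Prop :=
  (∀ Q ∈ S, Q.IsDyadic) ∧ ∀ Q ∈ S, (sChildren S Q).Subsingleton

end CBD

end
namespace CBD

private lemma aux_rank_rep {d : ℕ} (K : Set (Fin d → ℝ)) (h0 : (0 : Fin d → ℝ) ∈ K)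
    (B : ℝ) (hB : ∀ w ∈ K, ∀ j, |w j| ≤ B) :
    ∃ (v : Fin d → (Fin d → ℝ)) (c : Fin d → ((Fin d → ℝ) →ₗ[ℝ] ℝ)),
      (∀ i, v i ∈ K) ∧ (∀ w ∈ K, ∀ i, |c i w| ≤ 2) ∧
      (∀ w ∈ K, w = ∑ i, c i w • v i) := by
  classical
  set B' : ℝ := max B 0 with hB'def
  have hB'nonneg : 0 ≤ B' := le_max_right _ _
  have hB' : ∀ w ∈ K, ∀ j, |w j| ≤ B' := fun w hw j => (hB w hw j).trans (le_max_left _ _)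
  obtain ⟨t, htK, htspan, htind⟩ := exists_linearIndependent ℝ K
  replace htind : LinearIndepOn ℝ id t := htind
  set s : Set (Fin d → ℝ) := htind.extend (Set.subset_univ t) with hs
  have hts : t ⊆ s := htind.subset_extend _
  set e : Module.Basis s ℝ (Fin d → ℝ) := Module.Basis.extend htind with hedef
  haveI : Fintype s := FiniteDimensional.fintypeBasisIndex e
  have he : ∀ a : s, e a = (a : Fin d → ℝ) := fun a => Module.Basis.extend_apply_self htind a
  -- coordinate bound for elements of K
  have hcoord : ∀ a' : s, ∀ w ∈ K, |e.repr w a'| ≤ B' * ∑ j, |e.repr (Pi.single j 1) a'| := by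
    intro a' w hw
    have hwsum : w = ∑ j, w j • (Pi.single j 1 : Fin d → ℝ) := by
      funext k
      simp [Pi.single_apply, Finset.sum_apply]
    calc |e.repr w a'| = |∑ j, w j * e.repr (Pi.single j 1) a'| := by
          conv_lhs => rw [hwsum]
          rw [map_sum]
          simp [Finsupp.coe_smul]
      _ ≤ ∑ j, |w j * e.repr (Pi.single j 1) a'| := Finset.abs_sum_le_sum_abs _ _
      _ ≤ ∑ j, B' * |e.repr (Pi.single j 1) a'| := by
          refine Finset.sum_le_sum fun j _ => ?_
          rw [abs_mul]
          exact mul_le_mul_of_nonneg_right (hB' w hw j) (abs_nonneg _)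
      _ = B' * ∑ j, |e.repr (Pi.single j 1) a'| := by rw [Finset.mul_sum]
  -- candidate tuples
  set Cand : Set (s → (Fin d → ℝ)) :=
    {u | ∀ a : s, if (a : Fin d → ℝ) ∈ t then u a ∈ K else u a = (a : Fin d → ℝ)} with hCand
  set F : (s → (Fin d → ℝ)) → ℝ := fun u => e.det u with hF
  set S : Set ℝ := (fun u => |F u|) '' Cand with hSdef
  -- entrywise bound
  set γ : s → s → ℝ := fun a' a =>
    max (B' * ∑ j, |e.repr (Pi.single j 1) a'|) |e.repr (a : Fin d → ℝ) a'| with hγ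
  have hentry : ∀ u ∈ Cand, ∀ a a' : s, |e.repr (u a) a'| ≤ γ a' a := by
    intro u hu a a'
    have := hu a
    by_cases hat : (a : Fin d → ℝ) ∈ t
    · rw [if_pos hat] at this
      exact le_trans (hcoord a' _ this) (le_max_left _ _)
    · rw [if_neg hat] at this
      rw [this]
      exact le_max_right _ _
  have hub : BddAbove S := by
    refine ⟨∑ σ : Equiv.Perm s, ∏ a : s, γ (σ a) a, ?_⟩
    rintro x ⟨u, hu, rfl⟩
    have hdet : F u = ((e.toMatrix u).det) := Module.Basis.det_apply e u
    show |F u| ≤ _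
    rw [hdet, Matrix.det_apply]
    calc |∑ σ : Equiv.Perm s, Equiv.Perm.sign σ • ∏ a, e.toMatrix u (σ a) a|
        ≤ ∑ σ : Equiv.Perm s, |Equiv.Perm.sign σ • ∏ a, e.toMatrix u (σ a) a| :=
          Finset.abs_sum_le_sum_abs _ _
      _ ≤ ∑ σ : Equiv.Perm s, ∏ a, γ (σ a) a := by
          refine Finset.sum_le_sum fun σ _ => ?_
          have hsgn : |Equiv.Perm.sign σ • ∏ a, e.toMatrix u (σ a) a|
              = |∏ a, e.toMatrix u (σ a) a| := by
            rcases Int.units_eq_one_or (Equiv.Perm.sign σ) with h | h <;> simp [h]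
          rw [hsgn]
          rw [Finset.abs_prod]
          refine Finset.prod_le_prod (fun a _ => abs_nonneg _) fun a _ => ?_
          rw [Module.Basis.toMatrix_apply]
          exact hentry u hu a (σ a)
  have hone : (1 : ℝ) ∈ S := by
    refine ⟨fun a => (a : Fin d → ℝ), ?_, ?_⟩
    · intro a
      by_cases hat : (a : Fin d → ℝ) ∈ t
      · rw [if_pos hat]; exact htK hat
      · rw [if_neg hat]
    · have : (fun a : s => (a : Fin d → ℝ)) = ⇑e := by funext a; rw [he a]
      simp only [hF, this, Module.Basis.det_self, abs_one]
  set s0 : ℝ := sSup S with hs0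
  have hs0_ge : (1 : ℝ) ≤ s0 := le_csSup hub hone
  obtain ⟨x, ⟨u, hu, rfl⟩, hx0⟩ := exists_lt_of_lt_csSup ⟨1, hone⟩ (by linarith : s0 / 2 < s0)
  have hx : s0 / 2 < |F u| := hx0
  have hD : F u ≠ 0 := by
    intro h
    rw [h] at hx
    simp only [abs_zero] at hx
    linarith
  have hFu_pos : 0 < |F u| := abs_pos.mpr hD
  obtain ⟨hind, hspan⟩ := (Module.Basis.is_basis_iff_det e).mpr (isUnit_iff_ne_zero.mpr hD)
  set b' : Module.Basis s ℝ (Fin d → ℝ) := Module.Basis.mk hind hspan.ge with hb'def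
  have hb' : ⇑b' = u := Module.Basis.coe_mk _ _
  -- coefficient functionals
  set L : s → ((Fin d → ℝ) →ₗ[ℝ] ℝ) := fun a =>
    (F u)⁻¹ • (e.det.toMultilinearMap.toLinearMap u a) with hLdef
  have hLapp : ∀ a w, L a w = (F u)⁻¹ * e.det (Function.update u a w) := by
    intro a w
    simp [hLdef, MultilinearMap.toLinearMap]
  have hLbasis : ∀ a a' : s, (e.det.toMultilinearMap.toLinearMap u a) (u a') =
      if a' = a then F u else 0 := by
    intro a a'
    by_cases h : a' = a
    · subst h
      simp [MultilinearMap.toLinearMap, Function.update_eq_self, hF]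
    · simp only [MultilinearMap.toLinearMap, LinearMap.coe_mk, AddHom.coe_mk, if_neg h]
      refine AlternatingMap.map_eq_zero_of_eq _ _ (i := a) (j := a') ?_ (Ne.symm h)
      rw [Function.update_self, Function.update_of_ne h]
  have hrepr : ∀ a : s, ∀ w, L a w = b'.repr w a := by
    intro a w
    have hw : w = ∑ a', b'.repr w a' • u a' := by
      conv_lhs => rw [← b'.sum_repr w]
      simp [hb']
    have : (e.det.toMultilinearMap.toLinearMap u a) w = b'.repr w a * F u := by
      conv_lhs => rw [hw]
      rw [map_sum]
      simp only [_root_.map_smul, hLbasis, smul_eq_mul]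
      rw [Finset.sum_eq_single a]
      · simp
      · intro a' _ h; simp [if_neg h]
      · intro h; simp at h
    simp only [hLdef, LinearMap.smul_apply, this, smul_eq_mul]
    field_simp
  -- bound for coefficients at used indices
  have hLbound : ∀ w ∈ K, ∀ a : s, (a : Fin d → ℝ) ∈ t → |L a w| ≤ 2 := by
    intro w hw a hat
    have hcand : Function.update u a w ∈ Cand := by
      intro a''
      by_cases h : a'' = a
      · subst h
        rw [if_pos hat, Function.update_self]
        exact hw
      · rw [Function.update_of_ne h]
        exact hu a''
    have hnum : |e.det (Function.update u a w)| ≤ s0 :=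
      le_csSup hub ⟨Function.update u a w, hcand, rfl⟩
    rw [hLapp]
    rw [abs_mul, abs_inv]
    rw [inv_mul_le_iff₀ hFu_pos]
    calc |e.det (Function.update u a w)| ≤ s0 := hnum
      _ ≤ 2 * (s0 / 2) := by linarith
      _ ≤ 2 * |F u| := by linarith
      _ = |F u| * 2 := by ring
  -- vanishing of coefficients at unused indices
  have hused_span : Submodule.span ℝ (u '' {a : s | (a : Fin d → ℝ) ∈ t}) = Submodule.span ℝ t := by
    haveI : Fintype t := Set.Finite.fintype ((Set.toFinite s).subset hts)
    set used : Set s := {a : s | (a : Fin d → ℝ) ∈ t} with husedd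
    have le1 : Submodule.span ℝ (u '' used) ≤ Submodule.span ℝ t := by
      rw [Submodule.span_le]
      rintro _ ⟨a, ha, rfl⟩
      have hat : ((a : s) : Fin d → ℝ) ∈ t := ha
      have : u a ∈ K := by have := hu a; rwa [if_pos hat] at this
      have : u a ∈ Submodule.span ℝ K := Submodule.subset_span this
      rwa [← htspan] at this
    have h1 : Module.finrank ℝ (Submodule.span ℝ t) = t.toFinset.card := finrank_span_set_eq_card htind
    have hindused : LinearIndependent ℝ (fun a : used => u (a : s)) :=
      hind.comp ((↑) : used → s) Subtype.val_injective
    have h2 : Module.finrank ℝ (Submodule.span ℝ (Set.range fun a : used => u (a : s)))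
        = Fintype.card used := finrank_span_eq_card hindused
    have hrange : (Set.range fun a : used => u (a : s)) = u '' used :=
      (Set.image_eq_range u used).symm
    have hcards : Fintype.card used = Fintype.card t := by
      refine Fintype.card_congr ⟨fun a => ⟨(a : s), a.2⟩, fun x => ⟨⟨(x : Fin d → ℝ), hts x.2⟩, x.2⟩,
        fun a => by ext; rfl, fun x => by ext; rfl⟩
    refine Submodule.eq_of_le_of_finrank_le le1 ?_
    rw [h1, ← hrange, h2, hcards, Set.toFinset_card]
  have hzero : ∀ w ∈ K, ∀ a : s, (a : Fin d → ℝ) ∉ t → b'.repr w a = 0 := by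
    intro w hw a hat
    have hwspan : w ∈ Submodule.span ℝ (⇑b' '' {a : s | (a : Fin d → ℝ) ∈ t}) := by
      rw [hb', hused_span, htspan]
      exact Submodule.subset_span hw
    rw [Module.Basis.mem_span_image] at hwspan
    by_contra h
    exact hat (hwspan (Finsupp.mem_support_iff.mpr h))
  -- reindex to Fin d
  have hcardd : Fintype.card s = d := by
    have h1 := Module.finrank_eq_card_basis e
    rw [Module.finrank_fintype_fun_eq_card, Fintype.card_fin] at h1
    exact h1.symm
  set ε : s ≃ Fin d := Fintype.equivFinOfCardEq hcardd with hε
  refine ⟨fun i => if ((ε.symm i : s) : Fin d → ℝ) ∈ t then u (ε.symm i) else 0,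
    fun i => if ((ε.symm i : s) : Fin d → ℝ) ∈ t then L (ε.symm i) else 0, ?_, ?_, ?_⟩
  · intro i
    dsimp only
    by_cases h : ((ε.symm i : s) : Fin d → ℝ) ∈ t
    · rw [if_pos h]
      have := hu (ε.symm i); rwa [if_pos h] at this
    · rw [if_neg h]; exact h0
  · intro w hw i
    dsimp only
    by_cases h : ((ε.symm i : s) : Fin d → ℝ) ∈ t
    · rw [if_pos h]; exact hLbound w hw _ h
    · rw [if_neg h]; norm_num
  · intro w hw
    have key : ∀ a : s,
        ((if ((a : s) : Fin d → ℝ) ∈ t then L a else 0) w)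
          • (if ((a : s) : Fin d → ℝ) ∈ t then u a else 0) = b'.repr w a • u a := by
      intro a
      by_cases h : ((a : s) : Fin d → ℝ) ∈ t
      · rw [if_pos h, if_pos h, hrepr]
      · rw [if_neg h, if_neg h, hzero w hw a h]
        simp
    calc w = ∑ a : s, b'.repr w a • u a := by
          conv_lhs => rw [← b'.sum_repr w]
          simp [hb']
      _ = ∑ a : s, ((if ((a : s) : Fin d → ℝ) ∈ t then L a else 0) w)
            • (if ((a : s) : Fin d → ℝ) ∈ t then u a else 0) := by
          refine Finset.sum_congr rfl fun a _ => (key a).symm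
      _ = ∑ i : Fin d, ((if ((ε.symm i : s) : Fin d → ℝ) ∈ t then L (ε.symm i) else 0) w)
            • (if ((ε.symm i : s) : Fin d → ℝ) ∈ t then u (ε.symm i) else 0) :=
          (Equiv.sum_comp ε.symm _).symm

/-- Rank-`d` representation of measurable selections of `⟨⟨f⟩⟩_Q`:
there are `φ₁, …, φ_d` supported on `Q` with `‖φ_i‖_∞ ≤ 1` such that every
measurable selection `g` of `⟨⟨f⟩⟩_Q` can be written as
`g(x) = Σ_i ψ_i(x) ⟨φ_i f⟩_Q` with `‖ψ_i‖_∞ ≤ C(d)`. -/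
theorem cbAvg_rank_d_representation (d : ℕ) :
    ∃ C : ℝ, 0 < C ∧
      ∀ (N : ℕ) (Q : Cube N) (f : (Fin N → ℝ) → Fin d → ℝ),
        IntegrableOn f Q.set volume →
        ∃ φ : Fin d → (Fin N → ℝ) → ℝ,
          (∀ i, Measurable (φ i)) ∧ (∀ i x, |φ i x| ≤ 1) ∧
          (∀ i x, x ∉ Q.set → φ i x = 0) ∧
          ∀ g : (Fin N → ℝ) → Fin d → ℝ, Measurable g →
            (∀ᵐ x ∂(volume.restrict Q.set), g x ∈ cbAvg Q f) →
            ∃ ψ : Fin d → (Fin N → ℝ) → ℝ,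
              (∀ i, Measurable (ψ i)) ∧ (∀ i x, |ψ i x| ≤ C) ∧
              ∀ᵐ x ∂(volume.restrict Q.set),
                g x = ∑ i, ψ i x • (fun j => avg Q fun y => φ i y * f y j) := by
  classical
  refine ⟨2, two_pos, ?_⟩
  intro N Q f hf
  have hQmeas : MeasurableSet Q.set := by
    have hset : Q.set = Set.univ.pi fun i => Set.Ico (Q.corner i) (Q.corner i + Q.side) := by
      ext x; simp [Cube.set, Set.mem_pi, Set.mem_Ico]
    rw [hset]
    exact MeasurableSet.pi Set.countable_univ fun i _ => measurableSet_Ico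
  set K := cbAvg Q f with hK
  have h0 : (0 : Fin d → ℝ) ∈ K := by
    refine ⟨fun _ => 0, measurable_const, fun x => by norm_num, ?_⟩
    funext j
    simp [avg]
  have hfj : ∀ j, IntegrableOn (fun x => f x j) Q.set volume := fun j =>
    (ContinuousLinearMap.proj j : (Fin d → ℝ) →L[ℝ] ℝ).integrable_comp hf
  set B : ℝ := Q.vol⁻¹ * ∑ j, ∫ x in Q.set, |f x j| with hBdef
  have hB : ∀ w ∈ K, ∀ j, |w j| ≤ B := by
    rintro w ⟨φ, hφm, hφb, rfl⟩ j
    have hvolpos : (0:ℝ) < Q.vol := pow_pos Q.side_pos N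
    have hvol : (0:ℝ) ≤ Q.vol⁻¹ := inv_nonneg.mpr hvolpos.le
    have h1 : |∫ x in Q.set, φ x * f x j| ≤ ∫ x in Q.set, |f x j| := by
      have := norm_integral_le_of_norm_le (μ := volume.restrict Q.set)
        (f := fun x => φ x * f x j) (g := fun x => |f x j|) (hfj j).abs
        (Filter.Eventually.of_forall fun x => by
          rw [Real.norm_eq_abs, abs_mul]
          exact mul_le_of_le_one_left (abs_nonneg _) (hφb x))
      simpa [Real.norm_eq_abs] using this
    have h2 : (∫ x in Q.set, |f x j|) ≤ ∑ j', ∫ x in Q.set, |f x j'| :=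
      Finset.single_le_sum (f := fun j' => ∫ x in Q.set, |f x j'|)
        (fun j' _ => integral_nonneg fun x => abs_nonneg _) (Finset.mem_univ j)
    show |avg Q fun x => φ x * f x j| ≤ B
    rw [avg, abs_mul, abs_inv, abs_of_nonneg hvolpos.le]
    exact mul_le_mul_of_nonneg_left (h1.trans h2) hvol
  obtain ⟨v, c, hvK, hcb, hrep⟩ := aux_rank_rep K h0 B hB
  have hvK' : ∀ i, ∃ φ : (Fin N → ℝ) → ℝ, Measurable φ ∧ (∀ x, |φ x| ≤ 1) ∧
      v i = fun j => avg Q fun x => φ x * f x j := hvK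
  choose φ₀ hφ₀m hφ₀b hφ₀eq using hvK'
  refine ⟨fun i => Q.set.indicator (φ₀ i), fun i => (hφ₀m i).indicator hQmeas, ?_, ?_, ?_⟩
  · intro i x
    dsimp only
    by_cases hx : x ∈ Q.set
    · rw [Set.indicator_of_mem hx]; exact hφ₀b i x
    · rw [Set.indicator_of_notMem hx]; norm_num
  · intro i x hx
    exact Set.indicator_of_notMem hx _
  · intro g hgmeas hg
    have havg : ∀ i, (fun j => avg Q fun y => Q.set.indicator (φ₀ i) y * f y j) = v i := by
      intro i
      rw [hφ₀eq i]
      funext j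
      unfold avg
      congr 1
      refine setIntegral_congr_fun hQmeas fun y hy => ?_
      rw [Set.indicator_of_mem hy]
    refine ⟨fun i x => max (-2) (min 2 (c i (g x))), ?_, ?_, ?_⟩
    · intro i
      have hc : Continuous (c i) := (c i).continuous_of_finiteDimensional
      exact measurable_const.max (measurable_const.min (hc.measurable.comp hgmeas))
    · intro i x
      rw [abs_le]
      constructor
      · exact le_max_left _ _
      · exact max_le (by norm_num) (min_le_left _ _)
    · filter_upwards [hg] with x hx
      have h1 : ∀ i, |c i (g x)| ≤ 2 := fun i => hcb (g x) hx i
      have h2 : ∀ i, max (-2 : ℝ) (min 2 (c i (g x))) = c i (g x) := by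
        intro i
        rw [min_eq_right (abs_le.mp (h1 i)).2, max_eq_right (abs_le.mp (h1 i)).1]
      calc g x = ∑ i, c i (g x) • v i := hrep (g x) hx
        _ = ∑ i, max (-2 : ℝ) (min 2 (c i (g x)))
              • (fun j => avg Q fun y => Q.set.indicator (φ₀ i) y * f y j) := by
            refine Finset.sum_congr rfl fun i _ => ?_
            rw [h2 i, havg i]

end CBD
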